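/- Let Y be an Archimedean vector lattice and X a linear subspace of Y that is order dense in Y. Then the following statements are equivalent: (i) X is pervasive in Y; (ii) for every a ∈ X and every y ∈ Y with a < y there exists x ∈ X with a < x ≤ y; (iii) for every y ∈ Y with 0 < y one has y = sup {x ∈ X | 0 < x ≤ y}, the supremum taken in Y; (iv) for every y ∈ Y and every z ∈ X with z < y one has y = sup {x ∈ X | z < x ≤ y}, the supremum taken in Y. -/

import Mathlib

/-- Let `Y` be an Archimedean vector lattice and `X` an order dense linear
subspace of `Y`. TFAE: (i) `X` is pervasive in `Y`; (ii) for every `a ∈ X` and `y ∈ Y` with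
`a < y` there is `x ∈ X` with `a < x ≤ y`; (iii) every `0 < y` satisfies
`y = sup {x ∈ X | 0 < x ≤ y}`; (iv) for every `y ∈ Y` and `z ∈ X` with `z < y` one has
`y = sup {x ∈ X | z < x ≤ y}`. -/
theorem statement1
    {Y : Type*} [Lattice Y] [AddCommGroup Y] [Module ℝ Y]
    [CovariantClass Y Y (· + ·) (· ≤ ·)] [PosSMulMono ℝ Y]
    (hArch : ∀ x y : Y, (∀ n : ℕ, n • x ≤ y) → x ≤ 0)
    (X : Submodule ℝ Y)
    (hdense : ∀ y : Y, IsGLB {x : Y | x ∈ X ∧ y ≤ x} y) :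
    List.TFAE
      [∀ y : Y, 0 < y → ∃ x ∈ X, 0 < x ∧ x ≤ y,
       ∀ a ∈ X, ∀ y : Y, a < y → ∃ x ∈ X, a < x ∧ x ≤ y,
       ∀ y : Y, 0 < y → IsLUB {x : Y | x ∈ X ∧ 0 < x ∧ x ≤ y} y,
       ∀ y : Y, ∀ z ∈ X, z < y → IsLUB {x : Y | x ∈ X ∧ z < x ∧ x ≤ y} y] := by
  letI : IsOrderedAddMonoid Y :=
    { add_le_add_left := fun a b h c => by
        rw [add_comm a c, add_comm b c]; exact CovariantClass.elim c h }
  tfae_have 1 → 2 := by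
    intro h a ha y hay
    obtain ⟨x, hxX, hx0, hxy⟩ := h (y - a) (by rwa [sub_pos])
    refine ⟨a + x, X.add_mem ha hxX, (lt_add_iff_pos_right a).2 hx0, ?_⟩
    calc a + x ≤ a + (y - a) := add_le_add_right hxy a
    _ = y := by abel
  tfae_have 2 → 1 := fun h y hy => h 0 X.zero_mem y hy
  tfae_have 1 → 3 := by
    intro h y hy
    constructor
    · rintro x ⟨-, -, hxy⟩; exact hxy
    · intro b hb
      by_contra hyb
      have hinf : b ⊓ y < y := by
        rcases lt_or_eq_of_le (inf_le_right : b ⊓ y ≤ y) with h' | h'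
        · exact h'
        · exact absurd (h' ▸ inf_le_left) hyb
      obtain ⟨x, hxX, hx0, hxw⟩ := h (y - b ⊓ y) (by rwa [sub_pos])
      obtain ⟨s, hsX, hs0, hsy⟩ := h y hy
      have key : ∀ k : ℕ, s + k • x ≤ y := by
        intro k
        induction k with
        | zero => simpa using hsy
        | succ k ih =>
          have hmem : s + k • x ∈ {x : Y | x ∈ X ∧ 0 < x ∧ x ≤ y} :=
            ⟨X.add_mem hsX (X.toAddSubmonoid.nsmul_mem hxX k),
             lt_add_of_lt_of_nonneg hs0 (nsmul_nonneg hx0.le k), ih⟩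
          have h1 : s + k • x ≤ b ⊓ y := le_inf (hb hmem) ih
          calc s + (k + 1) • x = (s + k • x) + x := by rw [succ_nsmul]; abel
          _ ≤ b ⊓ y + (y - b ⊓ y) := add_le_add h1 hxw
          _ = y := by abel
      have : ∀ k : ℕ, k • x ≤ y - s := fun k =>
        le_sub_iff_add_le'.2 (key k)
      exact absurd (hArch x (y - s) this) hx0.not_ge
  tfae_have 3 → 1 := by
    intro h y hy
    by_contra hne
    push_neg at hne
    have h0 : y ≤ 0 := (h y hy).2 (by
      rintro x ⟨hxX, hx0, hxy⟩
      exact absurd hxy (hne x hxX hx0))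
    exact absurd hy h0.not_gt
  tfae_have 3 → 4 := by
    intro h y z hzX hzy
    have h' := h (y - z) (by rwa [sub_pos])
    constructor
    · rintro x ⟨-, -, hxy⟩; exact hxy
    · intro b hb
      have hub : b - z ∈ upperBounds {x : Y | x ∈ X ∧ 0 < x ∧ x ≤ y - z} := by
        rintro x ⟨hxX, hx0, hxy⟩
        have : z + x ≤ b := hb ⟨X.add_mem hzX hxX, (lt_add_iff_pos_right z).2 hx0,
          by calc z + x ≤ z + (y - z) := add_le_add_right hxy z
             _ = y := by abel⟩
        exact le_sub_iff_add_le'.2 this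
      have := h'.2 hub
      calc y = z + (y - z) := by abel
      _ ≤ z + (b - z) := add_le_add_right this z
      _ = b := by abel
  tfae_have 4 → 3 := by
    intro h y hy
    simpa using h y 0 X.zero_mem hy
  tfae_finish
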